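/- Let Γ = F₂^{⊕ℤ} ⋊ ℤ where ℤ acts by shifting coordinates, and for E ⊆ ℤ let H_E = F₂^{⊕E} ≤ Γ. If C ⊆ ℤ contains arbitrarily long intervals, then H_C is co-amenable in Γ (with respect to the generating set S = {s^{±1}, a^{±1}, b^{±1}} where a, b generate the F₂ factor at coordinate 0 and s generates ℤ). -/

import Mathlib

open scoped Pointwise

/-- The free group on two generators. -/
abbrev F2 := FreeGroup (Fin 2)

/-- The restricted direct product `F₂^{⊕ℤ}`, as the subgroup of finitely supported
elements of `∏_{i∈ℤ} F₂`. -/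
def Gsupp : Subgroup (ℤ → F2) where
  carrier := {f | {i : ℤ | f i ≠ 1}.Finite}
  one_mem' := by simp
  mul_mem' := by
    intro f g hf hg
    refine (hf.union hg).subset fun i hi => ?_
    by_contra h
    simp only [Set.mem_union, Set.mem_setOf_eq, not_or, not_not] at h
    exact hi (by simp [Pi.mul_apply, h.1, h.2])
  inv_mem' := by
    intro f hf
    refine hf.subset fun i hi => ?_
    simp only [Set.mem_setOf_eq, Pi.inv_apply] at hi ⊢
    intro h
    exact hi (by simp [h])

/-- The shift automorphism of `∏_{i∈ℤ} F₂` by `n`. -/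
def shiftPi (n : ℤ) : (ℤ → F2) ≃* (ℤ → F2) where
  toFun f := fun i => f (i - n)
  invFun f := fun i => f (i + n)
  left_inv f := by ext i; simp
  right_inv f := by ext i; simp
  map_mul' f g := rfl

/-- The shift automorphism of `F₂^{⊕ℤ}` by `n`. -/
def shiftG (n : ℤ) : Gsupp ≃* Gsupp where
  toFun f := ⟨shiftPi n f, by
    refine ((f.2.image (· + n)).subset fun i hi => ?_)
    exact ⟨i - n, hi, by ring⟩⟩
  invFun f := ⟨shiftPi (-n) f, by
    refine ((f.2.image (· + -n)).subset fun i hi => ?_)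
    exact ⟨i - -n, by simpa [shiftPi] using hi, by ring⟩⟩
  left_inv f := by
    ext i
    simp [shiftPi]
  right_inv f := by
    ext i
    simp [shiftPi]
  map_mul' f g := rfl

/-- The shift action of `ℤ` on `F₂^{⊕ℤ}` as a homomorphism into the automorphism
group. -/
def shiftHom : Multiplicative ℤ →* MulAut ↥Gsupp where
  toFun n := shiftG (Multiplicative.toAdd n)
  map_one' := by
    ext f i
    simp [shiftG, shiftPi]
  map_mul' m n := by
    ext f i
    simp [shiftG, shiftPi, sub_sub]

/-- The wreath-type product `Γ = F₂^{⊕ℤ} ⋊ ℤ`. -/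
abbrev WGamma := Gsupp ⋊[shiftHom] Multiplicative ℤ

/-- The element of `F₂^{⊕ℤ}` equal to `w` in coordinate `0` and trivial elsewhere. -/
def delta0 (w : F2) : Gsupp :=
  ⟨fun i => if i = 0 then w else 1, by
    refine (Set.finite_singleton (0 : ℤ)).subset fun i hi => ?_
    by_contra h
    simp only [Set.mem_singleton_iff] at h
    simp [h] at hi⟩

/-- The generator `a` (the first free generator in coordinate `0`). -/
def aGen : WGamma := SemidirectProduct.inl (delta0 (FreeGroup.of 0))

/-- The generator `b` (the second free generator in coordinate `0`). -/
def bGen : WGamma := SemidirectProduct.inl (delta0 (FreeGroup.of 1))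

/-- The generator `s` (the shift). -/
def sGen : WGamma := SemidirectProduct.inr (Multiplicative.ofAdd (1 : ℤ))

/-- The symmetric generating set `S = {s^{±1}, a^{±1}, b^{±1}}`. -/
noncomputable def SGen : Finset WGamma := by
  classical exact {sGen, aGen, bGen, sGen⁻¹, aGen⁻¹, bGen⁻¹}

/-- The subgroup `H_E = F₂^{⊕E}` of elements supported on `E ⊆ ℤ` with trivial
`ℤ`-component. -/
def HE (E : Set ℤ) : Subgroup WGamma where
  carrier := {x | x.right = 1 ∧ ∀ i : ℤ, i ∉ E → (x.left : ℤ → F2) i = 1}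
  one_mem' := by
    constructor
    · rfl
    · intro i _
      rfl
  mul_mem' := by
    rintro x y ⟨hx1, hx2⟩ ⟨hy1, hy2⟩
    constructor
    · simp [SemidirectProduct.mul_right, hx1, hy1]
    · intro i hi
      have : ((x * y).left : ℤ → F2) i
          = (x.left : ℤ → F2) i * ((shiftHom x.right y.left : Gsupp) : ℤ → F2) i := rfl
      rw [this, hx2 i hi, one_mul, hx1]
      simpa using hy2 i hi
  inv_mem' := by
    rintro x ⟨hx1, hx2⟩
    constructor
    · simp [SemidirectProduct.inv_right, hx1]
    · intro i hi
      have h1 : ((x⁻¹).left : ℤ → F2) i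
          = ((shiftHom x.right⁻¹ x.left⁻¹ : Gsupp) : ℤ → F2) i := rfl
      rw [h1, hx1, inv_one, map_one]
      simp [hx2 i hi]

/-- A subgroup `H ≤ Γ` is co-amenable (w.r.t. `S`) if the Schreier graph of the coset
space satisfies the Følner condition. -/
def Coamenable (H : Subgroup WGamma) : Prop :=
  ∀ ε : ℝ, 0 < ε → ∃ F : Finset (WGamma ⧸ H), F.Nonempty ∧
    ((((SGen : Set WGamma) • (F : Set (WGamma ⧸ H))) \ (F : Set (WGamma ⧸ H))).ncard : ℝ)
      ≤ ε * F.card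

section Aux

open SemidirectProduct

/-- The coset of `s^{-m}` in `Γ / H_C`. -/
noncomputable def cosetC (C : Set ℤ) (m : ℤ) : WGamma ⧸ HE C :=
  QuotientGroup.mk (inr (Multiplicative.ofAdd (-m)))

lemma inl_mem_HE {C : Set ℤ} {g : Gsupp} (h : ∀ i : ℤ, i ∉ C → (g : ℤ → F2) i = 1) :
    (inl g : WGamma) ∈ HE C := ⟨rfl, fun i hi => h i hi⟩

lemma conj_inl_mem {C : Set ℤ} {m : ℤ} (hm : m ∈ C) (w : F2) :
    (inr (Multiplicative.ofAdd m) : WGamma) * inl (delta0 w)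
      * (inr (Multiplicative.ofAdd m))⁻¹ ∈ HE C := by
  rw [← map_inv, ← SemidirectProduct.inl_aut]
  refine inl_mem_HE fun i hi => ?_
  have hne : i - m ≠ 0 := by
    intro h
    have him : i = m := by omega
    subst him
    exact hi hm
  show (if i - m = 0 then w else 1) = 1
  rw [if_neg hne]

lemma cosetC_inj {C : Set ℤ} {m m' : ℤ} (h : cosetC C m = cosetC C m') : m = m' := by
  rw [cosetC, cosetC, QuotientGroup.eq] at h
  have hr := h.1
  rw [← map_inv, ← map_mul, SemidirectProduct.right_inr] at hr
  have : m - m' = 0 := by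
    have := congrArg Multiplicative.toAdd hr
    simp at this; omega
  omega

lemma inl_smul_cosetC {C : Set ℤ} {m : ℤ} (hm : m ∈ C) (w : F2) :
    (inl (delta0 w) : WGamma) • cosetC C m = cosetC C m := by
  rw [cosetC, MulAction.Quotient.smul_mk, smul_eq_mul, QuotientGroup.eq]
  have key := (HE C).inv_mem (conj_inl_mem hm w)
  have hv : (inr (Multiplicative.ofAdd (-m)) : WGamma)
      = (inr (Multiplicative.ofAdd m) : WGamma)⁻¹ := by
    rw [ofAdd_neg, map_inv]
  rw [hv]
  convert key using 1
  group

lemma inl_inv_smul_cosetC {C : Set ℤ} {m : ℤ} (hm : m ∈ C) (w : F2) :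
    (inl (delta0 w) : WGamma)⁻¹ • cosetC C m = cosetC C m := by
  have := inl_smul_cosetC hm w
  calc (inl (delta0 w) : WGamma)⁻¹ • cosetC C m
      = (inl (delta0 w) : WGamma)⁻¹ • ((inl (delta0 w) : WGamma) • cosetC C m) := by rw [this]
    _ = cosetC C m := inv_smul_smul _ _

lemma sGen_smul_cosetC (C : Set ℤ) (m : ℤ) :
    sGen • cosetC C m = cosetC C (m - 1) := by
  rw [cosetC, cosetC, sGen, MulAction.Quotient.smul_mk, smul_eq_mul, ← map_mul]
  congr 2
  rw [← ofAdd_add]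
  congr 1
  ring

lemma sGen_inv_smul_cosetC (C : Set ℤ) (m : ℤ) :
    sGen⁻¹ • cosetC C m = cosetC C (m + 1) := by
  have := sGen_smul_cosetC C (m + 1)
  rw [show m + 1 - 1 = m by ring] at this
  rw [← this, inv_smul_smul]

end Aux

/-- In `Γ = F₂^{⊕ℤ} ⋊ ℤ`, if `C ⊆ ℤ` contains arbitrarily long intervals,
then `H_C = F₂^{⊕C}` is co-amenable (the Schreier graph of `Γ/H_C` w.r.t.
`S = {s^{±1}, a^{±1}, b^{±1}}` satisfies the Følner condition). -/



theorem HC_coamenable (C : Set ℤ)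
    (hC : ∀ n : ℕ, ∃ a : ℤ, Set.Icc a (a + n) ⊆ C) :
    Coamenable (HE C) := by
  intro ε hε
  obtain ⟨n, hn⟩ := exists_nat_ge (2 / ε)
  obtain ⟨a, ha⟩ := hC n
  classical
  set F : Finset (WGamma ⧸ HE C) := (Finset.Icc a (a + n)).image (cosetC C) with hF
  have hmemC : ∀ m ∈ Finset.Icc a (a + n), m ∈ C := by
    intro m hm
    exact ha (by simpa using hm)
  have hcard : F.card = n + 1 := by
    rw [hF, Finset.card_image_of_injective _ (fun _ _ h => cosetC_inj h), Int.card_Icc]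
    omega
  refine ⟨F, ?_, ?_⟩
  · rw [← Finset.card_pos, hcard]; omega
  · -- the difference set is contained in a pair
    have hsub : (((SGen : Set WGamma) • (F : Set (WGamma ⧸ HE C))) \ (F : Set (WGamma ⧸ HE C)))
        ⊆ {cosetC C (a - 1), cosetC C (a + n + 1)} := by
      rintro x ⟨hx, hxF⟩
      obtain ⟨s, hs, q, hq, rfl⟩ := hx
      rw [hF] at hq
      rw [Finset.mem_coe, Finset.mem_image] at hq
      obtain ⟨m, hm, rfl⟩ := hq
      have hmC : m ∈ C := hmemC m hm
      beta_reduce at hxF ⊢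
      have hmF : ∀ k ∈ Finset.Icc a (a + n), cosetC C k ∈ (F : Set (WGamma ⧸ HE C)) := by
        intro k hk
        rw [Finset.mem_coe, hF, Finset.mem_image]
        exact ⟨k, hk, rfl⟩
      rw [Finset.mem_coe] at hs
      have hs' : s = sGen ∨ s = aGen ∨ s = bGen ∨ s = sGen⁻¹ ∨ s = aGen⁻¹ ∨ s = bGen⁻¹ := by
        have h6 : SGen = {sGen, aGen, bGen, sGen⁻¹, aGen⁻¹, bGen⁻¹} := by
          rw [SGen]
        rw [h6] at hs
        simpa [Finset.mem_insert] using hs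
      rw [Finset.mem_Icc] at hm
      rcases hs' with rfl | rfl | rfl | rfl | rfl | rfl
      · -- s = sGen
        rw [sGen_smul_cosetC] at hxF ⊢
        by_cases hma : m = a
        · subst hma; left; rfl
        · exact absurd (hmF (m - 1) (by rw [Finset.mem_Icc]; omega)) hxF
      · -- s = aGen
        rw [show aGen = SemidirectProduct.inl (delta0 (FreeGroup.of 0)) from rfl,
          inl_smul_cosetC hmC] at hxF
        exact absurd (hmF m (by rw [Finset.mem_Icc]; omega)) hxF
      · -- s = bGen
        rw [show bGen = SemidirectProduct.inl (delta0 (FreeGroup.of 1)) from rfl,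
          inl_smul_cosetC hmC] at hxF
        exact absurd (hmF m (by rw [Finset.mem_Icc]; omega)) hxF
      · -- s = sGen⁻¹
        rw [sGen_inv_smul_cosetC] at hxF ⊢
        by_cases hma : m = a + n
        · subst hma; right; rfl
        · exact absurd (hmF (m + 1) (by rw [Finset.mem_Icc]; omega)) hxF
      · have hfix : aGen⁻¹ • cosetC C m = cosetC C m := by
          rw [inv_smul_eq_iff]
          exact (inl_smul_cosetC hmC (FreeGroup.of 0)).symm
        rw [hfix] at hxF
        exact absurd (hmF m (by rw [Finset.mem_Icc]; omega)) hxF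
      · have hfix : bGen⁻¹ • cosetC C m = cosetC C m := by
          rw [inv_smul_eq_iff]
          exact (inl_smul_cosetC hmC (FreeGroup.of 1)).symm
        rw [hfix] at hxF
        exact absurd (hmF m (by rw [Finset.mem_Icc]; omega)) hxF
    have hpair : ({cosetC C (a - 1), cosetC C (a + n + 1)} :
        Set (WGamma ⧸ HE C)).ncard ≤ 2 := by
      apply le_trans (Set.ncard_insert_le _ _)
      simp
    have hfin : ({cosetC C (a - 1), cosetC C (a + n + 1)} :
        Set (WGamma ⧸ HE C)).Finite := (Set.finite_singleton _).insert _
    have hle : (((SGen : Set WGamma) • (F : Set (WGamma ⧸ HE C))) \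
        (F : Set (WGamma ⧸ HE C))).ncard ≤ 2 :=
      le_trans (Set.ncard_le_ncard hsub hfin) hpair
    have h2 : (2 : ℝ) ≤ ε * F.card := by
      rw [hcard]
      have : 2 / ε ≤ (n : ℝ) + 1 := le_trans hn (by linarith)
      calc (2 : ℝ) = ε * (2 / ε) := by field_simp
        _ ≤ ε * ((n : ℝ) + 1) := by
            exact mul_le_mul_of_nonneg_left this (le_of_lt hε)
        _ = ε * ((n : ℕ) + 1 : ℕ) := by push_cast; ring
    calc ((((SGen : Set WGamma) • (F : Set (WGamma ⧸ HE C))) \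
        (F : Set (WGamma ⧸ HE C))).ncard : ℝ) ≤ 2 := by exact_mod_cast hle
      _ ≤ ε * F.card := h2
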